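/- Let F : C → D be an additive functor between preadditive categories. Then the induced functor Cau(F) : Cau(C) → Cau(D) between Cauchy completions is an equivalence of categories if and only if F is fully faithful and every object of D is a retract of a finite biproduct of objects in the essential image of F (i.e., arises as the splitting of an idempotent supported on a finite direct sum of objects F(X₁) ⊕ … ⊕ F(Xₙ)). -/

import Mathlib

open CategoryTheory CategoryTheory.Idempotents CategoryTheory.Limits

/-- The functor `Kar(G) : Kar(C') ⥤ Kar(D')` induced by a functor `G : C' ⥤ D'`,
sending `(X, p)` to `(G(X), G(p))`. -/
def karMap {C' D' : Type*} [Category C'] [Category D'] (G : C' ⥤ D') :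
    Karoubi C' ⥤ Karoubi D' where
  obj M := ⟨G.obj M.X, G.map M.p, by rw [← G.map_comp, M.idem]⟩
  map f := ⟨G.map f.f, by simp only [← G.map_comp, Karoubi.p_comp, Karoubi.comp_p]⟩
  map_id M := by
    apply Karoubi.hom_ext
    simp [Karoubi.id_f]
  map_comp f g := by
    apply Karoubi.hom_ext
    simp

/-- The functor `Cau(F) : Cau(C) ⥤ Cau(D)` induced by an additive functor `F : C ⥤ D`
on Cauchy completions `Cau(C) = Kar(Mat(C))`. -/
noncomputable def cauMap {C : Type u₁} [Category.{v₁} C] [Preadditive C]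
    {D : Type u₂} [Category.{v₁} D] [Preadditive D]
    (F : C ⥤ D) [F.Additive] : Karoubi (Mat_ C) ⥤ Karoubi (Mat_ D) :=
  karMap F.mapMat_

namespace CauAux

section Kar
variable {C' D' : Type*} [Category C'] [Category D'] (G : C' ⥤ D')

lemma karoubi_eq {A : C'} {p q : A ⟶ A} (hp : p ≫ p = p) (hq : q ≫ q = q)
    (h : p = q) : (⟨A, p, hp⟩ : Karoubi C') = ⟨A, q, hq⟩ := by subst h; rfl

lemma karMap_faithful [G.Faithful] : (karMap G).Faithful where
  map_injective {P Q} f g h := by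
    apply Karoubi.hom_ext
    exact G.map_injective (congrArg Karoubi.Hom.f h)

lemma karMap_full [G.Full] [G.Faithful] : (karMap G).Full where
  map_surjective {P Q} g := by
    refine ⟨⟨G.preimage g.f, G.map_injective ?_⟩, Karoubi.hom_ext _ _ (by simp [karMap])⟩
    simp only [Functor.map_comp, Functor.map_preimage]
    erw [Functor.map_preimage]
    exact g.comm

lemma karMap_additive [Preadditive C'] [Preadditive D'] [G.Additive] : (karMap G).Additive where
  map_add := by
    intros
    apply Karoubi.hom_ext
    simp [karMap]
    rfl

end Kar

universe v₁ u₁ u₂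

section MatAux
variable {C : Type u₁} [Category.{v₁} C] [Preadditive C]
  {D : Type u₂} [Category.{v₁} D] [Preadditive D] (F : C ⥤ D) [F.Additive]

lemma mapMat_faithful [F.Faithful] : F.mapMat_.Faithful where
  map_injective {M N} f g h := by
    funext i j
    exact F.map_injective (congr_fun (congr_fun h i) j)

lemma mapMat_full [F.Full] : F.mapMat_.Full where
  map_surjective {M N} g :=
    ⟨fun i j => F.preimage (g i j), by funext i j; simp [Functor.mapMat_]; exact F.map_preimage _⟩

instance mapMat_additive : F.mapMat_.Additive where
  map_add {M N f g} := by
    apply Mat_.hom_ext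
    intro i j
    rw [Mat_.add_apply]
    exact F.map_add

end MatAux

section EssImage
variable {A : Type*} {B : Type*} [Category A] [Category B]

lemma essImage_of_retract (E : A ⥤ B) [E.Full] [E.Faithful]
    [IsIdempotentComplete A] {Y : B} {N : A} (s : Y ⟶ E.obj N) (r : E.obj N ⟶ Y)
    (hsr : s ≫ r = 𝟙 Y) : E.essImage Y := by
  have hidem : E.preimage (r ≫ s) ≫ E.preimage (r ≫ s) = E.preimage (r ≫ s) := by
    apply E.map_injective
    simp only [Functor.map_comp, Functor.map_preimage]
    rw [Category.assoc, reassoc_of% hsr]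
  obtain ⟨Z, i, e, hie, hei⟩ := IsIdempotentComplete.idempotents_split N _ hidem
  have hp : E.map (E.preimage (r ≫ s)) = r ≫ s := E.map_preimage _
  refine ⟨Z, ⟨⟨E.map i ≫ r, s ≫ E.map e, ?_, ?_⟩⟩⟩
  · rw [Category.assoc, ← Category.assoc r s, ← hp, ← E.map_comp, ← E.map_comp, ← hei,
      show i ≫ (e ≫ i) ≫ e = (i ≫ e) ≫ i ≫ e by simp only [Category.assoc],
      hie, Category.id_comp, E.map_id]
  · rw [Category.assoc, ← Category.assoc (E.map e) (E.map i) r, ← E.map_comp, hei, hp]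
    simp only [Category.assoc, reassoc_of% hsr, hsr]

lemma essImage_of_retract' (E : A ⥤ B) [E.Full] [E.Faithful]
    [IsIdempotentComplete A] {Y Z : B} (hZ : E.essImage Z) (s : Y ⟶ Z) (r : Z ⟶ Y)
    (hsr : s ≫ r = 𝟙 Y) : E.essImage Y := by
  obtain ⟨N, ⟨hN⟩⟩ := hZ
  exact essImage_of_retract E (s ≫ hN.inv) (hN.hom ≫ r)
    (by rw [Category.assoc, Iso.inv_hom_id_assoc, hsr])

lemma essImage_biproduct [Preadditive A] [Preadditive B]
    [HasFiniteBiproducts A] [HasFiniteBiproducts B] (E : A ⥤ B) [E.Additive]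
    {J : Type} [Fintype J] (f : J → B) (hf : ∀ i, E.essImage (f i)) :
    E.essImage (⨁ f) := by
  choose g hg using hf
  exact ⟨⨁ g, ⟨E.mapBiproduct g ≪≫ biproduct.mapIso fun i => (hg i).some⟩⟩

end EssImage

end CauAux

/-- `Cau(F)` is an equivalence if and only if `F` is fully faithful and every object
of `D` is a retract of a finite biproduct of objects in the image of `F`. -/
theorem cauMap_isEquivalence_iff {C : Type u₁} [Category.{v₁} C] [Preadditive C]
    {D : Type u₂} [Category.{v₁} D] [Preadditive D] [HasFiniteBiproducts D]
    (F : C ⥤ D) [F.Additive] :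
    (cauMap F).IsEquivalence ↔
      (F.Full ∧ F.Faithful ∧
        ∀ Y : D, ∃ (n : ℕ) (X : Fin n → C)
          (r : (⨁ fun i => F.obj (X i)) ⟶ Y) (s : Y ⟶ ⨁ fun i => F.obj (X i)),
            s ≫ r = 𝟙 Y) := by
  let ιC : C ⥤ Karoubi (Mat_ C) := Mat_.embedding C ⋙ toKaroubi (Mat_ C)
  let ιD : D ⥤ Karoubi (Mat_ D) := Mat_.embedding D ⋙ toKaroubi (Mat_ D)
  have hobj : ∀ X : C, (cauMap F).obj (ιC.obj X) = ιD.obj (F.obj X) := fun X =>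
    CauAux.karoubi_eq _ _ (F.mapMat_.map_id ((Mat_.embedding C).obj X))
  constructor
  · intro hE
    haveI := hE.full
    haveI := hE.faithful
    haveI := hE.essSurj
    refine ⟨?_, ?_, ?_⟩
    · -- Full
      constructor
      intro X Y g
      let φ : (cauMap F).obj (ιC.obj X) ⟶ (cauMap F).obj (ιC.obj Y) :=
        ⟨fun _ _ => g, by simp [cauMap, karMap, ιC, ιD, toKaroubi]; exact Category.comp_id _⟩
      obtain ⟨ψ, hψ⟩ := (cauMap F).map_surjective φ
      refine ⟨ψ.f PUnit.unit PUnit.unit, ?_⟩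
      exact congr_fun (congr_fun (congrArg Karoubi.Hom.f hψ) PUnit.unit) PUnit.unit
    · -- Faithful
      constructor
      intro X Y f g h
      apply ιC.map_injective
      apply (cauMap F).map_injective
      apply Karoubi.hom_ext
      funext i j
      exact h
    · -- retract condition
      intro Y
      obtain ⟨N, ⟨hN⟩⟩ := Functor.EssSurj.mem_essImage (F := cauMap F) (ιD.obj Y)
      set M : Mat_ C := N.X with hM
      let n : ℕ := Fintype.card M.ι
      let e : M.ι ≃ Fin n := Fintype.equivFin M.ι
      let X : Fin n → C := fun j => M.X (e.symm j)
      refine ⟨n, X, ?_⟩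
      let MF : Mat_ D := F.mapMat_.obj M
      let pF : MF ⟶ MF := F.mapMat_.map N.p
      have hpF : pF ≫ pF = pF := by
        rw [← F.mapMat_.map_comp, N.idem]
      let T : Karoubi (Mat_ D) := (toKaroubi (Mat_ D)).obj MF
      let s₀ : (cauMap F).obj N ⟶ T := ⟨pF, by simp [T, toKaroubi, hpF, cauMap, karMap]; exact hpF⟩
      let r₀ : T ⟶ (cauMap F).obj N := ⟨pF, by simp [T, toKaroubi, hpF, cauMap, karMap]; exact hpF⟩
      have hs₀r₀ : s₀ ≫ r₀ = 𝟙 ((cauMap F).obj N) := by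
        apply Karoubi.hom_ext
        simp [s₀, r₀, hpF, cauMap, karMap, Karoubi.id_f]; rfl
      let isoT : T ≅ ιD.obj (⨁ fun j => F.obj (X j)) :=
        (toKaroubi (Mat_ D)).mapIso (Mat_.isoBiproductEmbedding MF) ≪≫
        (toKaroubi (Mat_ D)).mapBiproduct (fun i => (Mat_.embedding D).obj (MF.X i)) ≪≫
        biproduct.whiskerEquiv (show MF.ι ≃ Fin n from e)
          (fun i => eqToIso (by simp [X, MF, ιD, Function.comp, Equiv.symm_apply_apply]; erw [Equiv.symm_apply_apply]; rfl)) ≪≫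
        (ιD.mapBiproduct (fun j => F.obj (X j))).symm
      let S : ιD.obj Y ⟶ ιD.obj (⨁ fun j => F.obj (X j)) := hN.inv ≫ s₀ ≫ isoT.hom
      let R : ιD.obj (⨁ fun j => F.obj (X j)) ⟶ ιD.obj Y := isoT.inv ≫ r₀ ≫ hN.hom
      have hSR : S ≫ R = 𝟙 _ := by
        simp only [S, R, Category.assoc, Iso.hom_inv_id_assoc]
        rw [reassoc_of% hs₀r₀]
        simp
      refine ⟨ιD.preimage R, ιD.preimage S, ιD.map_injective ?_⟩
      rw [Functor.map_comp, Functor.map_preimage, Functor.map_preimage, hSR, CategoryTheory.Functor.map_id]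
  · rintro ⟨hFull, hFaithful, hRet⟩
    haveI := hFull
    haveI := hFaithful
    haveI : F.mapMat_.Faithful := CauAux.mapMat_faithful F
    haveI : F.mapMat_.Full := CauAux.mapMat_full F
    haveI : (cauMap F).Faithful := CauAux.karMap_faithful _
    haveI : (cauMap F).Full := CauAux.karMap_full _
    haveI : (cauMap F).Additive := CauAux.karMap_additive _
    have key : ∀ Y : D, (cauMap F).essImage (ιD.obj Y) := by
      intro Y
      obtain ⟨n, X, r, s, hsr⟩ := hRet Y
      have h1 : ∀ j : Fin n, (cauMap F).essImage (ιD.obj (F.obj (X j))) := fun j =>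
        ⟨ιC.obj (X j), ⟨eqToIso (hobj (X j))⟩⟩
      have h2 : (cauMap F).essImage ((⨁ fun j => ιD.obj (F.obj (X j)))) :=
        CauAux.essImage_biproduct _ _ h1
      have h3 : (cauMap F).essImage (ιD.obj (⨁ fun j => F.obj (X j))) :=
        Functor.essImage.ofIso (ιD.mapBiproduct (fun j => F.obj (X j))).symm h2
      exact CauAux.essImage_of_retract' (cauMap F) h3 (ιD.map s) (ιD.map r)
        (by rw [← ιD.map_comp, hsr, ιD.map_id])
    haveI : (cauMap F).EssSurj := by
      constructor
      intro P
      have h4 : ∀ i : P.X.ι, (cauMap F).essImage (ιD.obj (P.X.X i)) := fun i => key _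
      have h5 : (cauMap F).essImage ((⨁ fun i => ιD.obj (P.X.X i))) :=
        CauAux.essImage_biproduct _ _ h4
      have h6 : (cauMap F).essImage ((toKaroubi (Mat_ D)).obj P.X) := by
        refine Functor.essImage.ofIso ?_ h5
        exact ((toKaroubi (Mat_ D)).mapIso (Mat_.isoBiproductEmbedding P.X) ≪≫
          (toKaroubi (Mat_ D)).mapBiproduct (fun i => (Mat_.embedding D).obj (P.X.X i))).symm
      refine CauAux.essImage_of_retract' (cauMap F) h6 ⟨P.p, ?_⟩ ⟨P.p, ?_⟩ ?_
      · simp [toKaroubi, P.idem]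
      · simp [toKaroubi, P.idem]
      · apply Karoubi.hom_ext
        simp [P.idem, Karoubi.id_f]
    exact {}
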